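/- Order invariance on a path graph: let G be the path graph on vertices {0, 1, …, n−1} with i adjacent to j iff |i − j| = 1, and let (α_t)_{t∈ℕ} be a play in the APP movement model on G. Then for any two agents r and s with α_0(r) < α_0(s), it holds that α_t(r) < α_t(s) for every time step t; in particular, two agents can never exchange their positions (relative order) on a path. -/

import Mathlib

/-- Configuration `β` is obtained from configuration `α` by a legal joint move in the
APP movement model on graph `G`:
(i) each agent stays or moves to an adjacent vertex;
(ii) an agent may move into a vertex currently occupied by another agent only if that
agent vacates it at the same step;
(iii) no pair of agents swaps across an edge;
(iv) no two moving agents enter the same vertex. -/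
def LegalMove {V R : Type*} (G : SimpleGraph V) (α β : R → V) : Prop :=
  (∀ r, β r = α r ∨ G.Adj (α r) (β r)) ∧
  (∀ r s, r ≠ s → β r ≠ α r → β r = α s → β s ≠ α s) ∧
  (∀ r s, r ≠ s → ¬(β r = α s ∧ β s = α r)) ∧
  (∀ r s, r ≠ s → β r ≠ α r → β s ≠ α s → β r ≠ β s)

/-- A play in the APP movement model: the initial configuration is injective and each
successive configuration is obtained by a legal joint move. -/
def IsPlay {V R : Type*} (G : SimpleGraph V) (α : ℕ → R → V) : Prop :=
  Function.Injective (α 0) ∧ ∀ t, LegalMove G (α t) (α (t + 1))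

/-- The path graph on vertices `{0, 1, …, n-1}`: `i` and `j` are adjacent iff `|i - j| = 1`. -/
def pathG (n : ℕ) : SimpleGraph (Fin n) where
  Adj i j := i.val + 1 = j.val ∨ j.val + 1 = i.val
  symm := ⟨fun _ _ h => h.symm⟩
  loopless := ⟨fun i h => by rcases h with h | h <;> omega⟩

/-- Order invariance on a path graph: two agents can never exchange their relative order. -/
theorem path_order_invariance {n : ℕ} {R : Type*} [Fintype R]
    (α : ℕ → R → Fin n) (h : IsPlay (pathG n) α)
    (r s : R) (hrs : α 0 r < α 0 s) (t : ℕ) :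
    α t r < α t s := by
  induction t with
  | zero => exact hrs
  | succ t ih =>
    obtain ⟨hinj, hmove⟩ := h
    obtain ⟨h1, h2, h3, h4⟩ := hmove t
    have hrs' : r ≠ s := fun e => by subst e; exact lt_irrefl _ ih
    have hrv : (α (t+1) r).val = (α t r).val ∨ (α t r).val + 1 = (α (t+1) r).val ∨
        (α (t+1) r).val + 1 = (α t r).val := by
      rcases h1 r with h' | h'
      · left; rw [h']
      · right; exact h'
    have hsv : (α (t+1) s).val = (α t s).val ∨ (α t s).val + 1 = (α (t+1) s).val ∨
        (α (t+1) s).val + 1 = (α t s).val := by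
      rcases h1 s with h' | h'
      · left; rw [h']
      · right; exact h'
    rw [Fin.lt_def] at ih ⊢
    by_contra hcon
    push_neg at hcon
    have key : (α (t+1) r).val = (α (t+1) s).val ∨
        ((α (t+1) r).val = (α t r).val + 1 ∧ (α (t+1) s).val + 1 = (α t s).val ∧
          (α t r).val + 1 = (α t s).val) := by omega
    rcases key with key | ⟨k1, k2, k3⟩
    · have hab : α (t+1) r = α (t+1) s := Fin.ext key
      by_cases hra : α (t+1) r = α t r
      · have hsb : α (t+1) s ≠ α t s := fun e => by
          have e1 := congrArg Fin.val e
          have e2 := congrArg Fin.val hra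
          omega
        have hbs : α (t+1) s = α t r := hab ▸ hra
        exact h2 s r hrs'.symm hsb hbs hra
      · by_cases hsb : α (t+1) s = α t s
        · have hrb : α (t+1) r = α t s := hab.trans hsb
          exact (h2 r s hrs' hra hrb) hsb
        · exact h4 r s hrs' hra hsb hab
    · exact h3 r s hrs' ⟨Fin.ext (by omega), Fin.ext (by omega)⟩
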